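/- Let f, g : ℝ → ℝ be continuous on [0,1], nonnegative on [0,1], with ∫₀¹ f = ∫₀¹ g = 1. Then the condition f(u) + g(v) ≥ 1 for all u, v ∈ [0,1] holds if and only if there exist α ∈ [0,1] and functions r, s : ℝ → ℝ, nonnegative on [0,1] with ∫₀¹ r = ∫₀¹ s = 1, such that f(u) = (1 − α)·r(u) + α and g(v) = α·s(v) + (1 − α) for all u, v ∈ [0,1]. -/

import Mathlib

open MeasureTheory Set

lemma icc_zero_of_int_zero (h : ℝ → ℝ) (hc : ContinuousOn h (Icc (0:ℝ) 1))
    (hnn : ∀ x ∈ Icc (0:ℝ) 1, 0 ≤ h x) (hint : ∫ x in Icc (0:ℝ) 1, h x = 0) :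
    ∀ x ∈ Icc (0:ℝ) 1, h x = 0 := by
  have hInt : IntegrableOn h (Icc (0:ℝ) 1) := hc.integrableOn_Icc
  have hae : 0 ≤ᵐ[volume.restrict (Icc (0:ℝ) 1)] h :=
    (ae_restrict_iff' measurableSet_Icc).2 (ae_of_all _ hnn)
  have hzero : h =ᵐ[volume.restrict (Icc (0:ℝ) 1)] 0 :=
    (MeasureTheory.setIntegral_eq_zero_iff_of_nonneg_ae hae hInt).1 hint
  have := MeasureTheory.Measure.eqOn_Icc_of_ae_eq (μ := volume) (a := (0:ℝ)) (b := 1)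
    (by norm_num) hzero hc continuousOn_const
  exact fun x hx => this hx

lemma vol_icc : ∫ _ in Icc (0:ℝ) 1, (1:ℝ) = 1 := by
  simp [Real.volume_Icc]

theorem constructive_margins_characterization
    (f g : ℝ → ℝ)
    (hf_cont : ContinuousOn f (Icc (0:ℝ) 1))
    (hg_cont : ContinuousOn g (Icc (0:ℝ) 1))
    (hf_nonneg : ∀ u ∈ Icc (0:ℝ) 1, 0 ≤ f u)
    (hg_nonneg : ∀ v ∈ Icc (0:ℝ) 1, 0 ≤ g v)
    (hf_one : ∫ u in Icc (0:ℝ) 1, f u = 1)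
    (hg_one : ∫ v in Icc (0:ℝ) 1, g v = 1) :
    (∀ u ∈ Icc (0:ℝ) 1, ∀ v ∈ Icc (0:ℝ) 1, 1 ≤ f u + g v)
    ↔ ∃ α ∈ Icc (0:ℝ) 1, ∃ r s : ℝ → ℝ,
        (∀ u ∈ Icc (0:ℝ) 1, 0 ≤ r u) ∧ (∀ v ∈ Icc (0:ℝ) 1, 0 ≤ s v) ∧
        (∫ u in Icc (0:ℝ) 1, r u) = 1 ∧ (∫ v in Icc (0:ℝ) 1, s v) = 1 ∧
        (∀ u ∈ Icc (0:ℝ) 1, f u = (1 - α) * r u + α) ∧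
        (∀ v ∈ Icc (0:ℝ) 1, g v = α * s v + (1 - α)) := by
  have hfs : IntegrableOn f (Icc (0:ℝ) 1) := hf_cont.integrableOn_Icc
  have hgs : IntegrableOn g (Icc (0:ℝ) 1) := hg_cont.integrableOn_Icc
  have hconst : ∀ c : ℝ, IntegrableOn (fun _ => c) (Icc (0:ℝ) 1) :=
    fun c => integrableOn_const (by simp [Real.volume_Icc])
  have hintc : ∀ c : ℝ, ∫ _ in Icc (0:ℝ) 1, c = c := by
    intro c; simp [Real.volume_Icc]
  constructor
  · intro hpos
    obtain ⟨u₀, hu₀, hmin⟩ := isCompact_Icc.exists_isMinOn (nonempty_Icc.mpr zero_le_one) hf_cont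
    set α := f u₀ with hα
    have hα0 : 0 ≤ α := hf_nonneg u₀ hu₀
    have hαle : ∀ u ∈ Icc (0:ℝ) 1, α ≤ f u := fun u hu => hmin hu
    have hα1 : α ≤ 1 := by
      have h1 : ∫ _ in Icc (0:ℝ) 1, α ≤ ∫ u in Icc (0:ℝ) 1, f u :=
        setIntegral_mono_on (hconst α) hfs measurableSet_Icc hαle
      rw [hintc, hf_one] at h1; exact h1
    have hg_lb : ∀ v ∈ Icc (0:ℝ) 1, 1 - α ≤ g v := by
      intro v hv
      have := hpos u₀ hu₀ v hv
      linarith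
    refine ⟨α, ⟨hα0, hα1⟩, ?_⟩
    rcases eq_or_lt_of_le hα1 with h1 | h1
    · -- α = 1 : f ≡ 1 on Icc
      have hfeq : ∀ u ∈ Icc (0:ℝ) 1, f u = 1 := by
        have := icc_zero_of_int_zero (fun u => f u - 1)
          (hf_cont.sub continuousOn_const)
          (fun u hu => by show 0 ≤ f u - 1; have := hαle u hu; linarith)
          (by rw [integral_sub hfs (hconst 1), hf_one, hintc]; ring)
        intro u hu; have h2 : f u - 1 = 0 := this u hu; linarith
      refine ⟨fun _ => 1, g, fun _ _ => zero_le_one, hg_nonneg, hintc 1, hg_one, ?_, ?_⟩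
      · intro u hu; rw [hfeq u hu, h1]; ring
      · intro v hv; rw [h1]; ring
    · rcases eq_or_lt_of_le hα0 with h0 | h0
      · -- α = 0 : g ≡ 1 on Icc
        have hgeq : ∀ v ∈ Icc (0:ℝ) 1, g v = 1 := by
          have := icc_zero_of_int_zero (fun v => g v - 1)
            (hg_cont.sub continuousOn_const)
            (fun v hv => by show 0 ≤ g v - 1; have := hg_lb v hv; linarith)
            (by rw [integral_sub hgs (hconst 1), hg_one, hintc]; ring)
          intro v hv; have h2 : g v - 1 = 0 := this v hv; linarith
        refine ⟨f, fun _ => 1, hf_nonneg, fun _ _ => zero_le_one, hf_one, hintc 1, ?_, ?_⟩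
        · intro u hu; rw [← h0]; ring
        · intro v hv; rw [hgeq v hv, ← h0]; ring
      · -- 0 < α < 1
        refine ⟨fun u => (f u - α) / (1 - α), fun v => (g v - (1 - α)) / α, ?_, ?_, ?_, ?_, ?_, ?_⟩
        · intro u hu
          exact div_nonneg (by have := hαle u hu; linarith) (by linarith)
        · intro v hv
          exact div_nonneg (by have := hg_lb v hv; linarith) (by linarith)
        · have : (∫ u in Icc (0:ℝ) 1, (f u - α) / (1 - α))
              = (∫ u in Icc (0:ℝ) 1, (f u - α)) * (1 - α)⁻¹ := by
            simp_rw [div_eq_mul_inv]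
            exact integral_mul_const _ _
          rw [this, integral_sub hfs (hconst α), hf_one, hintc]
          rw [← div_eq_mul_inv, div_self (by linarith)]
        · have : (∫ v in Icc (0:ℝ) 1, (g v - (1 - α)) / α)
              = (∫ v in Icc (0:ℝ) 1, (g v - (1 - α))) * α⁻¹ := by
            simp_rw [div_eq_mul_inv]
            exact integral_mul_const _ _
          rw [this, integral_sub hgs (hconst (1 - α)), hg_one, hintc]
          rw [← div_eq_mul_inv]
          have : (1:ℝ) - (1 - α) = α := by ring
          rw [this, div_self (by linarith)]
        · intro u hu
          have hne : (1:ℝ) - α ≠ 0 := by linarith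
          field_simp
          ring
        · intro v hv
          have hne : α ≠ 0 := by linarith
          field_simp
          ring
  · rintro ⟨α, ⟨hα0, hα1⟩, r, s, hr, hs, _, _, hfr, hgs'⟩
    intro u hu v hv
    rw [hfr u hu, hgs' v hv]
    have h1 : 0 ≤ (1 - α) * r u := mul_nonneg (by linarith) (hr u hu)
    have h2 : 0 ≤ α * s v := mul_nonneg hα0 (hs v hv)
    linarith
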